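/- In the preferential attachment multigraph growth model with parameter θ > 0 on n vertices started from the empty graph, for every m ≥ 0 the degree sequence D*(m) = (D*_1(m),…,D*_n(m)) satisfies ℙ[D*(m) = d] = ((2m)! / (nθ)^{(2m)}) · Π_{i=1}^n θ^{(d_i)} / d_i! for every degree sequence d with Σ_i d_i = 2m, where x^{(k)} = x(x+1)⋯(x+k-1) is the rising factorial. -/

import Mathlib

open Finset Nat

/-- Rising factorial `x^{(k)} = x (x+1) ⋯ (x+k-1)` for real `x`. -/
noncomputable def riseR (x : ℝ) (k : ℕ) : ℝ := ∏ i ∈ Finset.range k, (x + i)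

/-- Degree of vertex `i` in the multigraph with adjacency matrix `G`
(a loop at `i` contributes `2` via the diagonal entry). -/
def deg {n : ℕ} (G : Fin n → Fin n → ℕ) (i : Fin n) : ℕ := ∑ j, G i j

/-- Add an edge between `i` and `j` (a loop if `i = j`, raising the diagonal
entry by `2`). -/
def addEdge {n : ℕ} (G : Fin n → Fin n → ℕ) (i j : Fin n) : Fin n → Fin n → ℕ :=
  fun p q => G p q + (if (p = i ∧ q = j) ∨ (p = j ∧ q = i) then 1 else 0) +
    (if i = j ∧ p = i ∧ q = i then 1 else 0)

/-- Probability of attaching the new edge at the pair `(i,j)` when the current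
graph `G` has `2m` half-edges, in the preferential attachment growth model. -/
noncomputable def stepProb {n : ℕ} (θ : ℝ) (m : ℕ) (G : Fin n → Fin n → ℕ)
    (i j : Fin n) : ℝ :=
  if i = j then
    ((deg G i : ℝ) + θ) * ((deg G i : ℝ) + θ + 1) /
      ((2 * m + n * θ) * (2 * m + n * θ + 1))
  else
    2 * ((deg G i : ℝ) + θ) * ((deg G j : ℝ) + θ) /
      ((2 * m + n * θ) * (2 * m + n * θ + 1))

/-- `P` is the law of the preferential attachment multigraph growth model:
`P m G` is the probability that the graph after `m` steps equals `G`. -/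
def IsGrowthLaw {n : ℕ} (θ : ℝ) (P : ℕ → (Fin n → Fin n → ℕ) → ℝ) : Prop :=
  (∀ G, P 0 G = if G = fun _ _ => 0 then 1 else 0) ∧
  ∀ m G', P (m + 1) G' =
    ∑' G : Fin n → Fin n → ℕ, P m G *
      ∑ i, ∑ j, (if i ≤ j ∧ G' = addEdge G i j then stepProb θ m G i j else 0)

/-! ### Auxiliary lemmas -/

lemma riseR_zero (x : ℝ) : riseR x 0 = 1 := by simp [riseR]

lemma riseR_succ (x : ℝ) (k : ℕ) : riseR x (k + 1) = riseR x k * (x + k) := by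
  simp [riseR, Finset.prod_range_succ]

lemma deg_addEdge {n : ℕ} (G : Fin n → Fin n → ℕ) (i j p : Fin n) :
    deg (addEdge G i j) p = deg G p + (if p = i then 1 else 0) + (if p = j then 1 else 0) := by
  unfold deg addEdge
  rw [Finset.sum_add_distrib, Finset.sum_add_distrib]
  rcases eq_or_ne i j with rfl | hij
  · simp only [and_self, true_and, or_self]
    rcases eq_or_ne p i with rfl | hpi
    · simp [Finset.sum_ite_eq']
    · simp [hpi, Finset.sum_ite_eq']
  · simp only [hij, false_and, if_false, Finset.sum_const_zero, add_zero]
    rcases eq_or_ne p i with rfl | hpi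
    · have hpj : p ≠ j := hij
      simp only [true_and, hpj, false_and, or_false, if_neg hpj]
      simp [Finset.sum_ite_eq']
    · rcases eq_or_ne p j with rfl | hpj
      · simp only [hpi, false_and, false_or, true_and, if_neg hpi]
        simp [Finset.sum_ite_eq']
      · simp [hpi, hpj]

/-- Finite superset of the support of the law after `m` steps. -/
noncomputable def gsupp (n : ℕ) : ℕ → Finset (Fin n → Fin n → ℕ)
  | 0 => {fun _ _ => 0}
  | (m + 1) => ((gsupp n m) ×ˢ (Finset.univ : Finset (Fin n × Fin n))).image
      (fun x => addEdge x.1 x.2.1 x.2.2)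

lemma addEdge_mem_gsupp {n : ℕ} {G : Fin n → Fin n → ℕ} {m : ℕ}
    (h : G ∈ gsupp n m) (i j : Fin n) : addEdge G i j ∈ gsupp n (m + 1) := by
  refine Finset.mem_image.2 ⟨(G, i, j), ?_, rfl⟩
  simp [h]

lemma P_vanish {n : ℕ} {θ : ℝ} {P : ℕ → (Fin n → Fin n → ℕ) → ℝ}
    (hP : IsGrowthLaw θ P) : ∀ m G, G ∉ gsupp n m → P m G = 0 := by
  intro m
  induction m with
  | zero =>
    intro G hG
    rw [hP.1]
    rw [gsupp, Finset.mem_singleton] at hG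
    simp [hG]
  | succ m ih =>
    intro G' hG'
    rw [hP.2]
    rw [tsum_eq_sum (s := ∅)]
    · simp
    intro G _
    by_cases hG : G ∈ gsupp n m
    · have : ∀ i j : Fin n,
          (if i ≤ j ∧ G' = addEdge G i j then stepProb θ m G i j else 0) = 0 := by
        intro i j
        rw [if_neg]
        rintro ⟨-, rfl⟩
        exact hG' (addEdge_mem_gsupp hG i j)
      simp [this]
    · rw [ih G hG, zero_mul]

lemma step_rearrange {n : ℕ} {θ : ℝ} {P : ℕ → (Fin n → Fin n → ℕ) → ℝ}
    (hP : IsGrowthLaw θ P) (m : ℕ) (d : Fin n → ℕ) :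
    (∑' G : Fin n → Fin n → ℕ, if ∀ i, deg G i = d i then P (m + 1) G else 0)
    = ∑ i, ∑ j, ∑ G ∈ gsupp n m,
        (if (∀ p, deg G p + (if p = i then 1 else 0) + (if p = j then 1 else 0) = d p) ∧ i ≤ j
          then P m G * stepProb θ m G i j else 0) := by
  rw [tsum_eq_sum (s := gsupp n (m + 1))
    (by intro G' h; rw [P_vanish hP _ _ h]; simp)]
  have key : ∀ G' ∈ gsupp n (m + 1),
      (if ∀ i, deg G' i = d i then P (m + 1) G' else 0)
      = ∑ G ∈ gsupp n m, ∑ i, ∑ j,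
          (if G' = addEdge G i j then
            (if (∀ p, deg G' p = d p) ∧ i ≤ j then P m G * stepProb θ m G i j else 0) else 0) := by
    intro G' _
    rw [hP.2 m G', tsum_eq_sum (s := gsupp n m)
      (by intro G h; rw [P_vanish hP _ _ h, zero_mul])]
    by_cases hχ : ∀ p, deg G' p = d p
    · rw [if_pos hχ]
      refine Finset.sum_congr rfl fun G _ => ?_
      rw [Finset.mul_sum]
      refine Finset.sum_congr rfl fun i _ => ?_
      rw [Finset.mul_sum]
      refine Finset.sum_congr rfl fun j _ => ?_
      by_cases h1 : G' = addEdge G i j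
      · subst h1
        by_cases h2 : i ≤ j <;> simp [h2, hχ]
      · simp [h1]
    · rw [if_neg hχ]
      symm
      refine Finset.sum_eq_zero fun G _ => Finset.sum_eq_zero fun i _ =>
        Finset.sum_eq_zero fun j _ => ?_
      simp [hχ]
  rw [Finset.sum_congr rfl key, Finset.sum_comm]
  have key2 : ∀ G ∈ gsupp n m,
      (∑ G' ∈ gsupp n (m + 1), ∑ i, ∑ j,
          (if G' = addEdge G i j then
            (if (∀ p, deg G' p = d p) ∧ i ≤ j then P m G * stepProb θ m G i j else 0) else 0))
      = ∑ i, ∑ j, (if (∀ p, deg G p + (if p = i then 1 else 0) + (if p = j then 1 else 0) = d p)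
            ∧ i ≤ j then P m G * stepProb θ m G i j else 0) := by
    intro G hG
    rw [Finset.sum_comm]
    refine Finset.sum_congr rfl fun i _ => ?_
    rw [Finset.sum_comm]
    refine Finset.sum_congr rfl fun j _ => ?_
    rw [Finset.sum_ite_eq' (gsupp n (m + 1)) (addEdge G i j)
      (fun H => if (∀ p, deg H p = d p) ∧ i ≤ j then P m G * stepProb θ m G i j else 0),
      if_pos (addEdge_mem_gsupp hG i j)]
    simp only [deg_addEdge]
  rw [Finset.sum_congr rfl key2, Finset.sum_comm]
  refine Finset.sum_congr rfl fun i _ => Finset.sum_comm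

lemma riseR_pos {x : ℝ} (hx : 0 < x) (k : ℕ) : 0 < riseR x k := by
  apply Finset.prod_pos
  intro i _
  positivity

lemma pair_sum {n : ℕ} (x : Fin n → ℝ) :
    (∑ i, ∑ j, (if i ≤ j then (if i = j then x i * (x i - 1) else 2 * x i * x j) else 0))
      = (∑ i, x i) ^ 2 - ∑ i, x i := by
  set A : Fin n → Fin n → ℝ :=
    fun i j => if i ≤ j then (if i = j then x i * (x i - 1) else 2 * x i * x j) else 0 with hA
  have hsymm : ∀ i j : Fin n,
      A i j + A j i = x i * x j + x j * x i - (if i = j then x i + x j else 0) := by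
    intro i j
    rcases lt_trichotomy i j with h | h | h
    · rw [hA]
      simp only
      rw [if_pos h.le, if_neg (not_le.2 h), if_neg h.ne, if_neg h.ne]
      ring
    · subst h
      rw [hA]
      simp
      ring
    · rw [hA]
      simp only
      rw [if_neg (not_le.2 h), if_pos h.le, if_neg h.ne, if_neg h.ne']
      ring
  have hcomm : (∑ i, ∑ j, A i j) = ∑ i, ∑ j, A j i := Finset.sum_comm
  have hdouble : (∑ i, ∑ j, A i j) + (∑ i, ∑ j, A i j)
      = ∑ i, ∑ j, (A i j + A j i) := by
    nth_rewrite 2 [hcomm]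
    rw [← Finset.sum_add_distrib]
    exact Finset.sum_congr rfl fun i _ => (Finset.sum_add_distrib).symm
  have hexp : ∑ i, ∑ j, (A i j + A j i) = 2 * (∑ i, x i) ^ 2 - 2 * ∑ i, x i := by
    have h1 : ∀ i : Fin n, ∑ j, (A i j + A j i)
        = x i * (∑ j, x j) + (∑ j, x j) * x i - 2 * x i := by
      intro i
      simp only [hsymm]
      rw [Finset.sum_sub_distrib, Finset.sum_add_distrib, ← Finset.mul_sum,
        ← Finset.sum_mul, Finset.sum_ite_eq]
      simp only [Finset.mem_univ, if_pos]
      ring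
    rw [Finset.sum_congr rfl fun i _ => h1 i]
    rw [Finset.sum_sub_distrib, Finset.sum_add_distrib, ← Finset.sum_mul,
      ← Finset.mul_sum, ← Finset.mul_sum]
    ring
  have := hdouble.trans hexp
  linarith

set_option maxHeartbeats 2000000 in
theorem stmt_9 {n : ℕ} (hn : 0 < n) (θ : ℝ) (hθ : 0 < θ)
    (P : ℕ → (Fin n → Fin n → ℕ) → ℝ) (hP : IsGrowthLaw θ P)
    (m : ℕ) (d : Fin n → ℕ) (hd : ∑ i, d i = 2 * m) :
    (∑' G : Fin n → Fin n → ℕ, if ∀ i, deg G i = d i then P m G else 0) =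
      (((2 * m)! : ℝ) / riseR (n * θ) (2 * m)) * ∏ i, riseR θ (d i) / ((d i)! : ℝ) := by
  induction m generalizing d with
  | zero =>
    have hd0 : ∀ i, d i = 0 := by
      intro i
      have h0 : ∑ i, d i = 0 := by simpa using hd
      exact Finset.sum_eq_zero_iff.1 h0 i (Finset.mem_univ i)
    rw [tsum_eq_sum (s := ({fun _ _ => 0} : Finset (Fin n → Fin n → ℕ)))]
    · rw [Finset.sum_singleton]
      have hdeg : ∀ i : Fin n, deg (fun _ _ => (0 : ℕ)) i = d i := by
        intro i; simp [deg, hd0 i]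
      rw [if_pos hdeg, hP.1, if_pos rfl]
      simp [riseR_zero, hd0]
    · intro G hG
      have hGne : G ≠ (fun _ _ => 0) := by simpa using hG
      rw [hP.1, if_neg hGne]
      simp
  | succ m ih =>
    rw [step_rearrange hP m d]
    have hn' : (0 : ℝ) < n := by exact_mod_cast hn
    have hnθ : (0 : ℝ) < n * θ := mul_pos hn' hθ
    have hm0 : (0 : ℝ) ≤ (m : ℝ) := Nat.cast_nonneg m
    have hD1 : (0 : ℝ) < 2 * m + n * θ := by linarith
    have hD2 : (0 : ℝ) < 2 * m + n * θ + 1 := by linarith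
    set x : Fin n → ℝ := fun i => (d i : ℝ) with hx
    have hsum : ∑ i, x i = 2 * (m : ℝ) + 2 := by
      have h := congrArg (fun k : ℕ => (k : ℝ)) hd
      push_cast at h
      rw [hx]
      rw [h]  -- may fail; check
      ring
    have hR : riseR ((n : ℝ) * θ) (2 * m) ≠ 0 := (riseR_pos hnθ _).ne'
    have inner_eq : ∀ i j : Fin n,
        (∑ G ∈ gsupp n m,
          (if (∀ p, deg G p + (if p = i then 1 else 0) + (if p = j then 1 else 0) = d p) ∧ i ≤ j
            then P m G * stepProb θ m G i j else 0))
        = (if i ≤ j then (if i = j then x i * (x i - 1) else 2 * x i * x j) else 0) *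
          ((((2 * m)! : ℝ) / riseR (n * θ) (2 * m)) * (∏ p, riseR θ (d p) / ((d p)! : ℝ)) /
            ((2 * m + n * θ) * (2 * m + n * θ + 1))) := by
      intro i j
      by_cases hij : i ≤ j
      swap
      · rw [if_neg hij, zero_mul]
        exact Finset.sum_eq_zero fun G _ => if_neg (by rintro ⟨-, h⟩; exact hij h)
      rw [if_pos hij]
      rcases eq_or_ne i j with rfl | hne
      · rw [if_pos rfl]
        by_cases h2 : 2 ≤ d i
        · -- main diagonal case
          have hdi : d i = (d i - 2) + 2 := by omega
          set k := d i - 2 with hk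
          set e : Fin n → ℕ := fun p => if p = i then k else d p with he
          have hei : e i = k := by rw [he]; simp
          have hep : ∀ p, p ≠ i → e p = d p := by intro p hp; rw [he]; simp [hp]
          have hcond : ∀ G : Fin n → Fin n → ℕ,
              ((∀ p, deg G p + (if p = i then 1 else 0) + (if p = i then 1 else 0) = d p)
                ↔ (∀ p, deg G p = e p)) := by
            intro G
            constructor <;> intro h p <;> have hp := h p
            · by_cases hpi : p = i
              · subst hpi; rw [if_pos rfl] at hp; rw [hei]; omega
              · rw [if_neg hpi] at hp; rw [hep p hpi]; omega
            · by_cases hpi : p = i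
              · subst hpi; rw [hei] at hp; rw [if_pos rfl]; omega
              · rw [hep p hpi] at hp; rw [if_neg hpi]; omega
          have hsum_e : ∑ p, e p = 2 * m := by
            have h1 : ∑ p, d p = ∑ p, (e p + if p = i then 2 else 0) := by
              refine Finset.sum_congr rfl fun p _ => ?_
              by_cases hpi : p = i
              · subst hpi; rw [hei, if_pos rfl]; omega
              · rw [hep p hpi, if_neg hpi]; omega
            rw [Finset.sum_add_distrib,
              Finset.sum_ite_eq' Finset.univ i (fun _ => (2 : ℕ)),
              if_pos (Finset.mem_univ i)] at h1
            omega
          have hvan : ∀ G ∉ gsupp n m,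
              (if ∀ p, deg G p = e p then P m G else 0) = 0 := by
            intro G hG; rw [P_vanish hP m G hG]; simp
          have hterm : ∀ G ∈ gsupp n m,
              (if (∀ p, deg G p + (if p = i then 1 else 0) + (if p = i then 1 else 0) = d p)
                  ∧ i ≤ i then P m G * stepProb θ m G i i else 0)
              = (((k : ℝ) + θ) * ((k : ℝ) + θ + 1) /
                  ((2 * m + n * θ) * (2 * m + n * θ + 1))) *
                (if ∀ p, deg G p = e p then P m G else 0) := by
            intro G _
            by_cases hG : ∀ p, deg G p = e p
            · rw [if_pos ⟨(hcond G).2 hG, le_refl i⟩, if_pos hG]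
              unfold stepProb
              rw [if_pos rfl, hG i, hei]
              ring
            · rw [if_neg hG, mul_zero]
              exact if_neg (by rintro ⟨hc, -⟩; exact hG ((hcond G).1 hc))
          rw [Finset.sum_congr rfl hterm, ← Finset.mul_sum, ← tsum_eq_sum (L := SummationFilter.unconditional _) hvan,
            ih e hsum_e]
          have hprodE : (∏ p, riseR θ (e p) / ((e p)! : ℝ))
              = (riseR θ k / (k ! : ℝ)) *
                ∏ p ∈ Finset.univ.erase i, riseR θ (d p) / ((d p)! : ℝ) := by
            rw [← Finset.mul_prod_erase Finset.univ _ (Finset.mem_univ i), hei]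
            congr 1
            exact Finset.prod_congr rfl fun p hp => by
              rw [hep p (Finset.ne_of_mem_erase hp)]
          have hprodD : (∏ p, riseR θ (d p) / ((d p)! : ℝ))
              = (riseR θ (d i) / ((d i)! : ℝ)) *
                ∏ p ∈ Finset.univ.erase i, riseR θ (d p) / ((d p)! : ℝ) :=
            (Finset.mul_prod_erase Finset.univ _ (Finset.mem_univ i)).symm
          have hrise2 : riseR θ (d i) = riseR θ k * (θ + k) * (θ + (k + 1)) := by
            rw [hdi, show k + 2 = (k + 1) + 1 by ring, riseR_succ, riseR_succ]
            push_cast; ring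
          have hfac2 : ((d i)! : ℝ) = ((k : ℝ) + 2) * ((k : ℝ) + 1) * (k ! : ℝ) := by
            rw [hdi, show k + 2 = (k + 1) + 1 by ring, Nat.factorial_succ, Nat.factorial_succ]
            push_cast; ring
          have hxi : x i = (k : ℝ) + 2 := by
            rw [hx]; simp only; rw [hdi]; push_cast; ring
          rw [hprodE, hprodD, hrise2, hfac2, hxi]
          set Q : ℝ := ∏ p ∈ Finset.univ.erase i, riseR θ (d p) / ((d p)! : ℝ) with hQ
          have hk0 : (k ! : ℝ) ≠ 0 := Nat.cast_ne_zero.2 (Nat.factorial_ne_zero k)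
          have hk1 : ((k : ℝ) + 1) ≠ 0 := by positivity
          have hk2 : ((k : ℝ) + 2) ≠ 0 := by positivity
          field_simp
          ring
        · -- degenerate diagonal case
          have hzero : ∀ G ∈ gsupp n m,
              (if (∀ p, deg G p + (if p = i then 1 else 0) + (if p = i then 1 else 0) = d p)
                  ∧ i ≤ i then P m G * stepProb θ m G i i else 0) = 0 := by
            intro G _
            refine if_neg ?_
            rintro ⟨hc, -⟩
            have := hc i
            rw [if_pos rfl] at this
            omega
          rw [Finset.sum_eq_zero hzero]
          have hx0 : x i * (x i - 1) = 0 := by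
            have hcase : d i = 0 ∨ d i = 1 := by omega
            simp only [hx]
            rcases hcase with h | h <;> rw [h] <;> norm_num
          rw [hx0, zero_mul]
      · -- off-diagonal case
        rw [if_neg hne]
        by_cases h1 : 1 ≤ d i ∧ 1 ≤ d j
        · obtain ⟨h1i, h1j⟩ := h1
          have hdi : d i = (d i - 1) + 1 := by omega
          have hdj : d j = (d j - 1) + 1 := by omega
          set k := d i - 1 with hk
          set l := d j - 1 with hl
          have hjne : j ≠ i := Ne.symm hne
          set e : Fin n → ℕ := fun p => if p = i then k else if p = j then l else d p with he
          have hei : e i = k := by rw [he]; simp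
          have hej : e j = l := by rw [he]; simp [hjne]
          have hep : ∀ p, p ≠ i → p ≠ j → e p = d p := by
            intro p hpi hpj; rw [he]; simp [hpi, hpj]
          have hcond : ∀ G : Fin n → Fin n → ℕ,
              ((∀ p, deg G p + (if p = i then 1 else 0) + (if p = j then 1 else 0) = d p)
                ↔ (∀ p, deg G p = e p)) := by
            intro G
            constructor <;> intro h p <;> have hp := h p
            · by_cases hpi : p = i
              · subst hpi; rw [if_pos rfl, if_neg hne] at hp; rw [hei]; omega
              · by_cases hpj : p = j
                · subst hpj; rw [if_neg hjne, if_pos rfl] at hp; rw [hej]; omega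
                · rw [if_neg hpi, if_neg hpj] at hp; rw [hep p hpi hpj]; omega
            · by_cases hpi : p = i
              · subst hpi; rw [hei] at hp; rw [if_pos rfl, if_neg hne]; omega
              · by_cases hpj : p = j
                · subst hpj; rw [hej] at hp; rw [if_neg hjne, if_pos rfl]; omega
                · rw [hep p hpi hpj] at hp; rw [if_neg hpi, if_neg hpj]; omega
          have hsum_e : ∑ p, e p = 2 * m := by
            have hh : ∑ p, d p
                = ∑ p, (e p + ((if p = i then 1 else 0) + (if p = j then 1 else 0))) := by
              refine Finset.sum_congr rfl fun p _ => ?_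
              by_cases hpi : p = i
              · subst hpi; rw [hei, if_pos rfl, if_neg hne]; omega
              · by_cases hpj : p = j
                · subst hpj; rw [hej, if_neg hjne, if_pos rfl]; omega
                · rw [hep p hpi hpj, if_neg hpi, if_neg hpj]; omega
            rw [Finset.sum_add_distrib, Finset.sum_add_distrib,
              Finset.sum_ite_eq' Finset.univ i (fun _ => (1 : ℕ)),
              Finset.sum_ite_eq' Finset.univ j (fun _ => (1 : ℕ)),
              if_pos (Finset.mem_univ i), if_pos (Finset.mem_univ j)] at hh
            omega
          have hvan : ∀ G ∉ gsupp n m,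
              (if ∀ p, deg G p = e p then P m G else 0) = 0 := by
            intro G hG; rw [P_vanish hP m G hG]; simp
          have hterm : ∀ G ∈ gsupp n m,
              (if (∀ p, deg G p + (if p = i then 1 else 0) + (if p = j then 1 else 0) = d p)
                  ∧ i ≤ j then P m G * stepProb θ m G i j else 0)
              = (2 * ((k : ℝ) + θ) * ((l : ℝ) + θ) /
                  ((2 * m + n * θ) * (2 * m + n * θ + 1))) *
                (if ∀ p, deg G p = e p then P m G else 0) := by
            intro G _
            by_cases hG : ∀ p, deg G p = e p
            · rw [if_pos ⟨(hcond G).2 hG, hij⟩, if_pos hG]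
              unfold stepProb
              rw [if_neg hne, hG i, hG j, hei, hej]
              ring
            · rw [if_neg hG, mul_zero]
              exact if_neg (by rintro ⟨hc, -⟩; exact hG ((hcond G).1 hc))
          rw [Finset.sum_congr rfl hterm, ← Finset.mul_sum, ← tsum_eq_sum (L := SummationFilter.unconditional _) hvan,
            ih e hsum_e]
          have hji : j ∈ Finset.univ.erase i :=
            Finset.mem_erase.2 ⟨hjne, Finset.mem_univ j⟩
          have hprodE : (∏ p, riseR θ (e p) / ((e p)! : ℝ))
              = (riseR θ k / (k ! : ℝ)) * ((riseR θ l / (l ! : ℝ)) *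
                ∏ p ∈ (Finset.univ.erase i).erase j, riseR θ (d p) / ((d p)! : ℝ)) := by
            rw [← Finset.mul_prod_erase Finset.univ _ (Finset.mem_univ i),
              ← Finset.mul_prod_erase _ _ hji, hei, hej]
            congr 2
            exact Finset.prod_congr rfl fun p hp => by
              rw [hep p (Finset.ne_of_mem_erase (Finset.mem_of_mem_erase hp))
                (Finset.ne_of_mem_erase hp)]
          have hprodD : (∏ p, riseR θ (d p) / ((d p)! : ℝ))
              = (riseR θ (d i) / ((d i)! : ℝ)) * ((riseR θ (d j) / ((d j)! : ℝ)) *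
                ∏ p ∈ (Finset.univ.erase i).erase j, riseR θ (d p) / ((d p)! : ℝ)) := by
            rw [← Finset.mul_prod_erase Finset.univ _ (Finset.mem_univ i),
              ← Finset.mul_prod_erase _ _ hji]
          have hrisei : riseR θ (d i) = riseR θ k * (θ + k) := by
            rw [hdi, riseR_succ]
          have hrisej : riseR θ (d j) = riseR θ l * (θ + l) := by
            rw [hdj, riseR_succ]
          have hfaci : ((d i)! : ℝ) = ((k : ℝ) + 1) * (k ! : ℝ) := by
            rw [hdi, Nat.factorial_succ]; push_cast; ring
          have hfacj : ((d j)! : ℝ) = ((l : ℝ) + 1) * (l ! : ℝ) := by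
            rw [hdj, Nat.factorial_succ]; push_cast; ring
          have hxi : x i = (k : ℝ) + 1 := by
            rw [hx]; simp only; rw [hdi]; push_cast; ring
          have hxj : x j = (l : ℝ) + 1 := by
            rw [hx]; simp only; rw [hdj]; push_cast; ring
          rw [hprodE, hprodD, hrisei, hrisej, hfaci, hfacj, hxi, hxj]
          set Q : ℝ := ∏ p ∈ (Finset.univ.erase i).erase j, riseR θ (d p) / ((d p)! : ℝ) with hQ
          have hk0 : (k ! : ℝ) ≠ 0 := Nat.cast_ne_zero.2 (Nat.factorial_ne_zero k)
          have hl0 : (l ! : ℝ) ≠ 0 := Nat.cast_ne_zero.2 (Nat.factorial_ne_zero l)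
          have hk1 : ((k : ℝ) + 1) ≠ 0 := by positivity
          have hl1 : ((l : ℝ) + 1) ≠ 0 := by positivity
          field_simp
          ring
        · -- degenerate off-diagonal case
          have hzero : ∀ G ∈ gsupp n m,
              (if (∀ p, deg G p + (if p = i then 1 else 0) + (if p = j then 1 else 0) = d p)
                  ∧ i ≤ j then P m G * stepProb θ m G i j else 0) = 0 := by
            intro G _
            refine if_neg ?_
            rintro ⟨hc, -⟩
            have hci := hc i
            have hcj := hc j
            rw [if_pos rfl, if_neg hne] at hci
            rw [if_neg (Ne.symm hne), if_pos rfl] at hcj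
            omega
          rw [Finset.sum_eq_zero hzero]
          have hx0 : 2 * x i * x j = 0 := by
            have hcase : d i = 0 ∨ d j = 0 := by omega
            simp only [hx]
            rcases hcase with h | h <;> rw [h] <;> norm_num
          rw [hx0, zero_mul]
    have H : (∑ i, ∑ j, ∑ G ∈ gsupp n m,
          (if (∀ p, deg G p + (if p = i then 1 else 0) + (if p = j then 1 else 0) = d p) ∧ i ≤ j
            then P m G * stepProb θ m G i j else 0))
        = (∑ i, ∑ j, (if i ≤ j then (if i = j then x i * (x i - 1) else 2 * x i * x j) else 0)) *
          ((((2 * m)! : ℝ) / riseR (n * θ) (2 * m)) * (∏ p, riseR θ (d p) / ((d p)! : ℝ)) /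
            ((2 * m + n * θ) * (2 * m + n * θ + 1))) := by
      rw [Finset.sum_mul]
      refine Finset.sum_congr rfl fun i _ => ?_
      rw [Finset.sum_mul]
      exact Finset.sum_congr rfl fun j _ => inner_eq i j
    rw [H, pair_sum x, hsum]
    have hfac : ((2 * (m + 1))! : ℝ) = ((2 * m)! : ℝ) * (2 * (m : ℝ) + 1) * (2 * (m : ℝ) + 2) := by
      rw [show 2 * (m + 1) = (2 * m + 1) + 1 by ring, Nat.factorial_succ, Nat.factorial_succ]
      push_cast
      ring
    have hrise : riseR (n * θ) (2 * (m + 1))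
        = riseR (n * θ) (2 * m) * (n * θ + 2 * m) * (n * θ + (2 * m + 1)) := by
      rw [show 2 * (m + 1) = (2 * m + 1) + 1 by ring, riseR_succ, riseR_succ]
      push_cast
      ring
    rw [hfac, hrise]
    field_simp
    ring
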